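/- In the oruga graph of size n with the standard framing, the map sending an arc α starting at integer i and ending at integer j > i (going above or below each integer strictly between them) to the brick s̄_α with left corner at vertex i, right corner at vertex j−1, and path using the top edge between k−1 and k iff α passes above k, is a bijection between arcs on [n] and bricks of the oruga graph; moreover two arcs form a noncrossing arc diagram (they do not cross and share no left or right endpoint) if and only if the corresponding bricks are coherent. -/

import Mathlib

open List
open scoped Classical

/-- A framed graph: a flow graph (DAG on vertices `0, …, V-1` with edges directed from
smaller to larger vertices) together with a framing, i.e. total orders on the incoming and
outgoing edges at each vertex, encoded by injective rational keys. -/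
structure FramedGraph where
  V : ℕ
  E : Type
  [fintypeE : Fintype E]
  [decEqE : DecidableEq E]
  src : E → ℕ
  tgt : E → ℕ
  src_lt_tgt : ∀ e, src e < tgt e
  tgt_lt_V : ∀ e, tgt e < V
  inOrd : E → ℚ
  outOrd : E → ℚ
  inOrd_inj : ∀ e e', tgt e = tgt e' → inOrd e = inOrd e' → e = e'
  outOrd_inj : ∀ e e', src e = src e' → outOrd e = outOrd e' → e = e'

attribute [instance] FramedGraph.fintypeE FramedGraph.decEqE

namespace FramedGraph

section Defs

variable (Γ : FramedGraph)

def IsSource (v : ℕ) : Prop := v < Γ.V ∧ ∀ e, Γ.tgt e ≠ v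

def IsSink (v : ℕ) : Prop := v < Γ.V ∧ ∀ e, Γ.src e ≠ v

def IsInternal (v : ℕ) : Prop := (∃ e, Γ.tgt e = v) ∧ (∃ e, Γ.src e = v)

noncomputable def sources : Finset ℕ := (Finset.range Γ.V).filter fun v => ∀ e, Γ.tgt e ≠ v

noncomputable def sinks : Finset ℕ := (Finset.range Γ.V).filter fun v => ∀ e, Γ.src e ≠ v

/-- A (directed) path: consecutive edges compose. -/
def IsPath (p : List Γ.E) : Prop := p.Chain' fun e f => Γ.tgt e = Γ.src f

/-- A route: a nonempty path from a source to a sink. -/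
def IsRoute (p : List Γ.E) : Prop :=
  p ≠ [] ∧ Γ.IsPath p ∧ (∀ e, p.head? = some e → Γ.IsSource (Γ.src e)) ∧
    ∀ e, p.getLast? = some e → Γ.IsSink (Γ.tgt e)

/-- A left corner: an internal vertex together with two incoming edges that are
consecutive in the framing. -/
structure LeftCorner where
  v : ℕ
  lo : Γ.E
  hi : Γ.E
  tgt_lo : Γ.tgt lo = v
  tgt_hi : Γ.tgt hi = v
  lo_lt_hi : Γ.inOrd lo < Γ.inOrd hi
  consec : ∀ e, Γ.tgt e = v → ¬(Γ.inOrd lo < Γ.inOrd e ∧ Γ.inOrd e < Γ.inOrd hi)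
  internal : ∃ e, Γ.src e = v

/-- A right corner: an internal vertex together with two outgoing edges that are
consecutive in the framing. -/
structure RightCorner where
  v : ℕ
  lo : Γ.E
  hi : Γ.E
  src_lo : Γ.src lo = v
  src_hi : Γ.src hi = v
  lo_lt_hi : Γ.outOrd lo < Γ.outOrd hi
  consec : ∀ e, Γ.src e = v → ¬(Γ.outOrd lo < Γ.outOrd e ∧ Γ.outOrd e < Γ.outOrd hi)
  internal : ∃ e, Γ.tgt e = v

/-- The key of a left corner: inserted strictly between its two defining edges in the
extended incoming framing order. -/
def LeftCorner.key (c : Γ.LeftCorner) : ℚ := (Γ.inOrd c.lo + Γ.inOrd c.hi) / 2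

def RightCorner.key (c : Γ.RightCorner) : ℚ := (Γ.outOrd c.lo + Γ.outOrd c.hi) / 2

/-- The data of a generalized path/route: an optional left corner, an optional right
corner and a list of edges. -/
structure GRoute where
  lc : Option Γ.LeftCorner
  rc : Option Γ.RightCorner
  path : List Γ.E

end Defs

section GDefs

variable {Γ : FramedGraph}

/-- A plain route viewed as a generalized route. -/
def routeG (p : List Γ.E) : Γ.GRoute := ⟨none, none, p⟩

/-- `g` is a generalized route: its path is a path, starting at a source or at its left
corner, and ending at a sink or at its right corner. -/
def IsGRoute (g : Γ.GRoute) : Prop :=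
  Γ.IsPath g.path ∧
  (∀ e, g.path.head? = some e →
    (match g.lc with
     | some c => Γ.src e = c.v
     | none => Γ.IsSource (Γ.src e))) ∧
  (∀ e, g.path.getLast? = some e →
    (match g.rc with
     | some c => Γ.tgt e = c.v
     | none => Γ.IsSink (Γ.tgt e))) ∧
  (g.path = [] → ∃ cl cr, g.lc = some cl ∧ g.rc = some cr ∧ cl.v = cr.v)

/-- A brick: a generalized route from a left corner to a right corner. -/
def IsBrick (g : Γ.GRoute) : Prop := IsGRoute g ∧ g.lc.isSome ∧ g.rc.isSome

/-- A left-cornered route with left corner `c`. -/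
def IsLCRouteAt (c : Γ.LeftCorner) (g : Γ.GRoute) : Prop :=
  IsGRoute g ∧ g.lc = some c ∧ g.rc = none

/-- Key list of the reversed prefix of `g` before `v` (used for the incoming preorder at
`v`, by lexicographic comparison). -/
def GRoute.inKeys (g : Γ.GRoute) (v : ℕ) : List ℚ :=
  ((g.path.filter fun e => Γ.tgt e ≤ v).reverse.map Γ.inOrd) ++
    g.lc.elim [] fun c => [c.key]

/-- Key list of the suffix of `g` after `v` (used for the outgoing preorder at `v`). -/
def GRoute.outKeys (g : Γ.GRoute) (v : ℕ) : List ℚ :=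
  ((g.path.filter fun e => v ≤ Γ.src e).map Γ.outOrd) ++
    g.rc.elim [] fun c => [c.key]

/-- `g` passes through the vertex `v`. -/
def GRoute.passes (g : Γ.GRoute) (v : ℕ) : Prop :=
  (∃ e ∈ g.path, Γ.src e = v ∨ Γ.tgt e = v) ∨ (∃ c, g.lc = some c ∧ c.v = v) ∨
    (∃ c, g.rc = some c ∧ c.v = v)

/-- Strict lexicographic comparison of key lists. -/
def lexLt (a b : List ℚ) : Prop := List.Lex (· < ·) a b

def lexLe (a b : List ℚ) : Prop := a = b ∨ lexLt a b

/-- `g` is clockwise to `h` at `v`: both pass through `v`, `g` is strictly smaller in the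
incoming preorder at `v` and strictly larger in the outgoing preorder at `v`. -/
def CwAt (g h : Γ.GRoute) (v : ℕ) : Prop :=
  g.passes v ∧ h.passes v ∧ lexLt (g.inKeys v) (h.inKeys v) ∧
    lexLt (h.outKeys v) (g.outKeys v)

/-- Weak coherence (noncrossing): neither is clockwise to the other at any vertex. -/
def WeakCoherent (g h : Γ.GRoute) : Prop := ∀ v, ¬CwAt g h v ∧ ¬CwAt h g v

/-- Coherence: weakly coherent and not sharing a left corner nor a right corner. -/
def Coherent (g h : Γ.GRoute) : Prop :=
  WeakCoherent g h ∧ (∀ c, g.lc = some c → h.lc ≠ some c) ∧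
    ∀ c, g.rc = some c → h.rc ≠ some c

/-- A clique of routes: a set of pairwise coherent routes. -/
def IsClique (Δ : Set (List Γ.E)) : Prop :=
  (∀ p ∈ Δ, Γ.IsRoute p) ∧ ∀ p ∈ Δ, ∀ q ∈ Δ, p ≠ q → WeakCoherent (routeG p) (routeG q)

def IsMaxClique (Δ : Set (List Γ.E)) : Prop :=
  IsClique Δ ∧ ∀ Δ', IsClique Δ' → Δ ⊆ Δ' → Δ' = Δ

/-- Two adjacent maximal cliques sharing all routes but one, with `r ∈ Δ \ Δ'` and
`r' ∈ Δ' \ Δ`. -/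
def Adjacent (Δ Δ' : Set (List Γ.E)) (r r' : List Γ.E) : Prop :=
  IsMaxClique Δ ∧ IsMaxClique Δ' ∧ r ∈ Δ ∧ r ∉ Δ' ∧ r' ∈ Δ' ∧ r' ∉ Δ ∧
    Δ \ {r} = Δ' \ {r'}

/-- Counterclockwise rotation `Δ → Δ'` (a covering relation of the framing lattice):
the removed route `r` is clockwise to the added route `r'`. -/
def Rotation (Δ Δ' : Set (List Γ.E)) : Prop :=
  ∃ r r', Adjacent Δ Δ' r r' ∧ ∃ v, CwAt (routeG r) (routeG r') v

/-- The order of the framing lattice: the reflexive-transitive closure of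
counterclockwise rotations. -/
def cliqueLe : Set (List Γ.E) → Set (List Γ.E) → Prop := Relation.ReflTransGen Rotation

/-- The upper cornering route of `Δ` at the left corner `c`: the smallest route of `Δ` in
the incoming preorder at `c.v` using the edge `c.hi`. -/
def IsUpperCornering (Δ : Set (List Γ.E)) (c : Γ.LeftCorner) (r : List Γ.E) : Prop :=
  r ∈ Δ ∧ c.hi ∈ r ∧
    ∀ p ∈ Δ, c.hi ∈ p → ¬lexLt ((routeG p).inKeys c.v) ((routeG r).inKeys c.v)

/-- The lower cornering route of `Δ` at the left corner `c`: the largest route of `Δ` in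
the incoming preorder at `c.v` using the edge `c.lo`. -/
def IsLowerCornering (Δ : Set (List Γ.E)) (c : Γ.LeftCorner) (r : List Γ.E) : Prop :=
  r ∈ Δ ∧ c.lo ∈ r ∧
    ∀ p ∈ Δ, c.lo ∈ p → ¬lexLt ((routeG r).inKeys c.v) ((routeG p).inKeys c.v)

noncomputable def upperCornering (Δ : Set (List Γ.E)) (c : Γ.LeftCorner) : List Γ.E :=
  Classical.epsilon (IsUpperCornering Δ c)

/-- The suffix of a path from the vertex `v` on. -/
def suffixFrom (p : List Γ.E) (v : ℕ) : List Γ.E := p.filter fun e => v ≤ Γ.src e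

/-- The left-cornered route of `Δ` at `c`: the corner `c` followed by the common suffix
of the cornering routes of `Δ` at `c`. -/
noncomputable def lcRouteOf (Δ : Set (List Γ.E)) (c : Γ.LeftCorner) : Γ.GRoute :=
  ⟨some c, none, suffixFrom (upperCornering Δ c) c.v⟩

/-- The left cubical coordinate of `Δ` at `c`: the corank of the left-cornered route of
`Δ` at `c` in the outgoing order at `c.v` among all left-cornered routes with corner `c`. -/
noncomputable def CCL (Δ : Set (List Γ.E)) (c : Γ.LeftCorner) : ℕ :=
  Nat.card {g : Γ.GRoute //
    IsLCRouteAt c g ∧ lexLt ((lcRouteOf Δ c).outKeys c.v) (g.outKeys c.v)}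

/-- A brick is left-clockwise to a clique if it is clockwise to one of its routes at the
vertex of its left corner. -/
def LeftCw (b : Γ.GRoute) (Δ : Set (List Γ.E)) : Prop :=
  ∃ c, b.lc = some c ∧ ∃ p ∈ Δ, CwAt b (routeG p) c.v

/-- `s` is the subroute of conflict of `r` and `r'`: a maximal common subpath containing
a vertex at which `r` and `r'` are incoherent. -/
def IsConflictSub (r r' s : List Γ.E) : Prop :=
  ∃ v, (CwAt (routeG r) (routeG r') v ∨ CwAt (routeG r') (routeG r) v) ∧
    s.IsInfix r ∧ s.IsInfix r' ∧ (s = [] ∨ (routeG s).passes v) ∧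
    ∀ t : List Γ.E, t.IsInfix r → t.IsInfix r' → (t = [] ∨ (routeG t).passes v) →
      t.IsInfix s

/-- The brick `b` is the label of the exchange of `r` (clockwise) for `r'`: its path is
the subroute of conflict, its left corner is formed by the last edges of the prefixes and
its right corner by the first edges of the suffixes. -/
def IsLabelData (r r' : List Γ.E) (b : Γ.GRoute) : Prop :=
  IsConflictSub r r' b.path ∧
  ∃ r₁ r₂ r₁' r₂' cl cr, r = r₁ ++ b.path ++ r₂ ∧ r' = r₁' ++ b.path ++ r₂' ∧
    b.lc = some cl ∧ b.rc = some cr ∧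
    r₁.getLast? = some cl.lo ∧ r₁'.getLast? = some cl.hi ∧
    r₂.head? = some cr.hi ∧ r₂'.head? = some cr.lo

/-- The brick `b` labels the covering relation `Δ ⋖ Δ'` of the framing lattice. -/
def IsLabel (Δ Δ' : Set (List Γ.E)) (b : Γ.GRoute) : Prop :=
  ∃ r r', Adjacent Δ Δ' r r' ∧ (∃ v, CwAt (routeG r) (routeG r') v) ∧ IsLabelData r r' b

/-- `b` labels a lower covering relation of `Δ`. -/
def IsDownLabel (Δ : Set (List Γ.E)) (b : Γ.GRoute) : Prop := ∃ Δ', IsLabel Δ' Δ b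

/-- A brick clique: a (possibly empty) set of pairwise coherent bricks. -/
def IsBrickClique (T : Set Γ.GRoute) : Prop :=
  (∀ b ∈ T, IsBrick b) ∧ ∀ b ∈ T, ∀ b' ∈ T, b ≠ b' → Coherent b b'

/-- A join-irreducible element of the framing lattice: a maximal clique with a unique
lower cover. -/
def JoinIrr (Δ : Set (List Γ.E)) : Prop := IsMaxClique Δ ∧ ∃! Δ', Rotation Δ' Δ

end GDefs

end FramedGraph

open FramedGraph

/-- The oruga graph of size `n`: vertices `0, …, n` and two parallel edges between `i-1`
and `i` for all `i`, with the standard framing (the lower edge, labelled `false`, is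
smaller than the upper edge, labelled `true`, and the outgoing order at `i` matches the
incoming order at `i+1`). -/
def oruga (n : ℕ) : FramedGraph where
  V := n + 1
  E := Fin n × Bool
  fintypeE := inferInstance
  decEqE := inferInstance
  src e := e.1
  tgt e := e.1 + 1
  src_lt_tgt e := Nat.lt_succ_self _
  tgt_lt_V e := Nat.succ_lt_succ e.1.isLt
  inOrd e := if e.2 then 1 else 0
  outOrd e := if e.2 then 1 else 0
  inOrd_inj := by
    rintro ⟨i, b⟩ ⟨j, c⟩ h1 h2
    simp only [Prod.mk.injEq]
    refine ⟨Fin.ext (Nat.succ_injective h1), ?_⟩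
    cases b <;> cases c <;> simp_all
  outOrd_inj := by
    rintro ⟨i, b⟩ ⟨j, c⟩ h1 h2
    simp only [Prod.mk.injEq]
    exact ⟨Fin.ext h1, by cases b <;> cases c <;> simp_all⟩

/-- The route of the oruga graph corresponding to a binary word (`false` = lower edge
`0`, `true` = upper edge `1`). -/
def toRoute {n : ℕ} (w : Fin n → Bool) : List (oruga n).E :=
  (List.finRange n).map fun i => ((i, w i) : (oruga n).E)

/-- An arc on `[n]` in the sense of Reading: it starts at `a`, ends at `b > a`, and
passes above exactly the integers of `S ⊆ (a, b)`. -/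
structure Arc (n : ℕ) where
  a : ℕ
  b : ℕ
  S : Set ℕ
  one_le_a : 1 ≤ a
  a_lt_b : a < b
  b_le_n : b ≤ n
  S_mem : ∀ k ∈ S, a < k ∧ k < b

/-- The level of an arc at an integer of its closed span: `1/2` at its endpoints, `1`
above the integers it passes above, `0` below the others. -/
noncomputable def Arc.level {n : ℕ} (α : Arc n) (k : ℕ) : ℚ :=
  if k = α.a ∨ k = α.b then 1 / 2 else if k ∈ α.S then 1 else 0

/-- Two arcs form a noncrossing arc diagram: they share no left endpoint, no right
endpoint, and their levels never flip on the common span (no crossing). -/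
noncomputable def Noncrossing {n : ℕ} (α β : Arc n) : Prop :=
  α.a ≠ β.a ∧ α.b ≠ β.b ∧
  ¬∃ u v : ℕ, max α.a β.a ≤ u ∧ u ≤ v ∧ v ≤ min α.b β.b ∧
    ((α.level u < β.level u ∧ β.level v < α.level v) ∨
      (β.level u < α.level u ∧ α.level v < β.level v))

/-- The arc `α` corresponds to the brick `g` of the oruga graph: left corner at vertex
`α.a`, right corner at vertex `α.b − 1`, and the path uses the top edge between `k − 1`
and `k` iff `α` passes above `k`. -/
def ArcCorresponds {n : ℕ} (α : Arc n) (g : FramedGraph.GRoute (oruga n)) : Prop :=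
  (∃ cl, g.lc = some cl ∧ cl.v = α.a) ∧
  (∃ cr, g.rc = some cr ∧ cr.v = α.b - 1) ∧
  g.path.length = α.b - 1 - α.a ∧
  ∀ (t : ℕ) (ht : t < g.path.length),
    (((g.path.get ⟨t, ht⟩ : Fin n × Bool)).1 : ℕ) = α.a + t ∧
    (((g.path.get ⟨t, ht⟩ : Fin n × Bool)).2 = true ↔ (α.a + t + 1) ∈ α.S)


namespace ArcsBricksAux

open FramedGraph

variable {n : ℕ}

/-! ### Canonical corners of the oruga graph -/

lemma inOrd_def (e : (oruga n).E) : (oruga n).inOrd e = if e.2 then 1 else 0 := rfl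
lemma outOrd_def (e : (oruga n).E) : (oruga n).outOrd e = if e.2 then 1 else 0 := rfl
lemma src_def (e : (oruga n).E) : (oruga n).src e = (e.1 : ℕ) := rfl
lemma tgt_def (e : (oruga n).E) : (oruga n).tgt e = (e.1 : ℕ) + 1 := rfl


def mkLC (n v : ℕ) (h1 : 1 ≤ v) (h2 : v < n) : (oruga n).LeftCorner where
  v := v
  lo := (⟨v - 1, by omega⟩, false)
  hi := (⟨v - 1, by omega⟩, true)
  tgt_lo := by show (v - 1) + 1 = v; omega
  tgt_hi := by show (v - 1) + 1 = v; omega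
  lo_lt_hi := by show (0:ℚ) < 1; norm_num
  consec := by
    rintro ⟨i, b⟩ - h
    cases b
    · change (0:ℚ) < 0 ∧ _ at h; exact lt_irrefl _ h.1
    · change _ ∧ (1:ℚ) < 1 at h; exact lt_irrefl _ h.2
  internal := ⟨(⟨v, h2⟩, false), rfl⟩

def mkRC (n v : ℕ) (h1 : 1 ≤ v) (h2 : v < n) : (oruga n).RightCorner where
  v := v
  lo := (⟨v, h2⟩, false)
  hi := (⟨v, h2⟩, true)
  src_lo := rfl
  src_hi := rfl
  lo_lt_hi := by show (0:ℚ) < 1; norm_num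
  consec := by
    rintro ⟨i, b⟩ - h
    cases b
    · change (0:ℚ) < 0 ∧ _ at h; exact lt_irrefl _ h.1
    · change _ ∧ (1:ℚ) < 1 at h; exact lt_irrefl _ h.2
  internal := ⟨(⟨v - 1, by omega⟩, false), by show (v - 1) + 1 = v; omega⟩

lemma inOrd_true (i : Fin n) : (oruga n).inOrd (i, true) = 1 := rfl
lemma inOrd_false (i : Fin n) : (oruga n).inOrd (i, false) = 0 := rfl

lemma lc_lo_snd (c : (oruga n).LeftCorner) : c.lo.2 = false := by
  have h := c.lo_lt_hi
  cases hlo : c.lo.2 <;> cases hhi : c.hi.2 <;>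
    simp only [inOrd_def, outOrd_def, hlo, hhi, if_true, if_false] at h <;> first | rfl | norm_num at h

lemma lc_hi_snd (c : (oruga n).LeftCorner) : c.hi.2 = true := by
  have h := c.lo_lt_hi
  cases hlo : c.lo.2 <;> cases hhi : c.hi.2 <;>
    simp only [inOrd_def, outOrd_def, hlo, hhi, if_true, if_false] at h <;> first | rfl | norm_num at h

lemma rc_lo_snd (c : (oruga n).RightCorner) : c.lo.2 = false := by
  have h := c.lo_lt_hi
  cases hlo : c.lo.2 <;> cases hhi : c.hi.2 <;>
    simp only [inOrd_def, outOrd_def, hlo, hhi, if_true, if_false] at h <;> first | rfl | norm_num at h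

lemma rc_hi_snd (c : (oruga n).RightCorner) : c.hi.2 = true := by
  have h := c.lo_lt_hi
  cases hlo : c.lo.2 <;> cases hhi : c.hi.2 <;>
    simp only [inOrd_def, outOrd_def, hlo, hhi, if_true, if_false] at h <;> first | rfl | norm_num at h

lemma lc_eq_of_v {c c' : (oruga n).LeftCorner} (h : c.v = c'.v) : c = c' := by
  have hlo : c.lo = c'.lo := by
    have h1 : (c.lo.1 : ℕ) + 1 = c.v := c.tgt_lo
    have h2 : (c'.lo.1 : ℕ) + 1 = c'.v := c'.tgt_lo
    have : c.lo.1 = c'.lo.1 := Fin.ext (by omega)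
    exact Prod.ext this (by rw [lc_lo_snd, lc_lo_snd])
  have hhi : c.hi = c'.hi := by
    have h1 : (c.hi.1 : ℕ) + 1 = c.v := c.tgt_hi
    have h2 : (c'.hi.1 : ℕ) + 1 = c'.v := c'.tgt_hi
    have : c.hi.1 = c'.hi.1 := Fin.ext (by omega)
    exact Prod.ext this (by rw [lc_hi_snd, lc_hi_snd])
  cases c; cases c'; simp_all

lemma rc_eq_of_v {c c' : (oruga n).RightCorner} (h : c.v = c'.v) : c = c' := by
  have hlo : c.lo = c'.lo := by
    have h1 : (c.lo.1 : ℕ) = c.v := c.src_lo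
    have h2 : (c'.lo.1 : ℕ) = c'.v := c'.src_lo
    have : c.lo.1 = c'.lo.1 := Fin.ext (by omega)
    exact Prod.ext this (by rw [rc_lo_snd, rc_lo_snd])
  have hhi : c.hi = c'.hi := by
    have h1 : (c.hi.1 : ℕ) = c.v := c.src_hi
    have h2 : (c'.hi.1 : ℕ) = c'.v := c'.src_hi
    have : c.hi.1 = c'.hi.1 := Fin.ext (by omega)
    exact Prod.ext this (by rw [rc_hi_snd, rc_hi_snd])
  cases c; cases c'; simp_all

lemma lc_key (n v : ℕ) (h1 : 1 ≤ v) (h2 : v < n) : (mkLC n v h1 h2).key = 1 / 2 := by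
  show ((oruga n).inOrd _ + (oruga n).inOrd _) / 2 = 1 / 2
  show ((0:ℚ) + 1) / 2 = 1 / 2; norm_num

lemma rc_key (n v : ℕ) (h1 : 1 ≤ v) (h2 : v < n) : (mkRC n v h1 h2).key = 1 / 2 := by
  show ((oruga n).outOrd _ + (oruga n).outOrd _) / 2 = 1 / 2
  show ((0:ℚ) + 1) / 2 = 1 / 2; norm_num

end ArcsBricksAux

namespace ArcsBricksAux

open FramedGraph

variable {n : ℕ}

noncomputable def boolS (α : Arc n) (k : ℕ) : Bool := if k ∈ α.S then true else false

lemma boolS_iff (α : Arc n) (k : ℕ) : boolS α k = true ↔ k ∈ α.S := by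
  unfold boolS; split <;> simp_all

noncomputable def mkPath (α : Arc n) : List (oruga n).E :=
  List.ofFn (n := α.b - 1 - α.a) fun t =>
    (⟨α.a + t, by have := α.a_lt_b; have := α.b_le_n; have := t.isLt; omega⟩,
      boolS α (α.a + t + 1))

lemma mkPath_length (α : Arc n) : (mkPath α).length = α.b - 1 - α.a := by
  unfold mkPath; exact List.length_ofFn

lemma mkPath_get (α : Arc n) (t : ℕ) (ht : t < (mkPath α).length) :
    (mkPath α)[t] =
      (⟨α.a + t, by have := α.a_lt_b; have := α.b_le_n; rw [mkPath_length] at ht; omega⟩,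
        boolS α (α.a + t + 1)) := by
  unfold mkPath
  exact List.getElem_ofFn _

noncomputable def mkBrick (α : Arc n) : (oruga n).GRoute :=
  ⟨some (mkLC n α.a α.one_le_a (by have := α.a_lt_b; have := α.b_le_n; omega)),
   some (mkRC n (α.b - 1) (by have := α.a_lt_b; have := α.one_le_a; omega)
      (by have := α.a_lt_b; have := α.b_le_n; omega)),
   mkPath α⟩

lemma mkBrick_corresponds (α : Arc n) : ArcCorresponds α (mkBrick α) := by
  refine ⟨⟨_, rfl, rfl⟩, ⟨_, rfl, rfl⟩, mkPath_length α, ?_⟩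
  intro t ht
  have ht' : t < (mkPath α).length := ht
  constructor
  · show (((mkPath α)[t]).1 : ℕ) = α.a + t
    rw [mkPath_get _ _ ht']
  · show ((mkPath α)[t]).2 = true ↔ _
    rw [mkPath_get _ _ ht']
    exact boolS_iff α _

lemma mkBrick_isBrick (α : Arc n) : IsBrick (mkBrick α) := by
  have hab := α.a_lt_b
  have hbn := α.b_le_n
  have ha1 := α.one_le_a
  refine ⟨⟨?_, ?_, ?_, ?_⟩, rfl, rfl⟩
  · -- IsPath
    show (oruga n).IsPath (mkPath α)
    rw [IsPath]; apply List.isChain_iff_getElem.mpr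
    intro i hi
    rw [mkPath_length] at hi
    rw [mkPath_get _ _ (by rw [mkPath_length]; omega),
        mkPath_get _ _ (by rw [mkPath_length]; omega)]
    show α.a + i + 1 = α.a + (i + 1)
    omega
  · -- head
    intro e he
    have he' : (mkPath α)[0]? = some e := by
      rw [← List.head?_eq_getElem?]; exact he
    rw [List.getElem?_eq_some_iff] at he'
    obtain ⟨h0, he'⟩ := he'
    show (oruga n).src e = α.a
    rw [← he', mkPath_get _ _ h0]
    show α.a + 0 = α.a
    omega
  · -- last
    intro e he
    have he' : (mkPath α)[(mkPath α).length - 1]? = some e := by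
      rw [← List.getLast?_eq_getElem?]; exact he
    rw [List.getElem?_eq_some_iff] at he'
    obtain ⟨h0, he'⟩ := he'
    show (oruga n).tgt e = α.b - 1
    rw [← he', mkPath_get _ _ h0]
    show α.a + ((mkPath α).length - 1) + 1 = α.b - 1
    rw [mkPath_length] at h0 ⊢
    omega
  · -- empty path case
    intro hp
    refine ⟨_, _, rfl, rfl, ?_⟩
    show α.a = α.b - 1
    have h0 : (mkPath α).length = 0 := by
      show (mkBrick α).path.length = 0
      rw [hp]; rfl
    rw [mkPath_length] at h0
    omega

lemma corresponds_unique {α : Arc n} {g : (oruga n).GRoute} (h : ArcCorresponds α g) :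
    g = mkBrick α := by
  obtain ⟨⟨cl, hcl, hclv⟩, ⟨cr, hcr, hcrv⟩, hlen, hget⟩ := h
  have hpath : g.path = mkPath α := by
    refine List.ext_getElem (by rw [hlen, mkPath_length]) ?_
    intro t h₁ h₂
    obtain ⟨hfst, hsnd⟩ := hget t h₁
    rw [mkPath_get _ _ h₂]
    refine Prod.ext (Fin.ext ?_) ?_
    · simpa using hfst
    · show (g.path[t]).2 = boolS α (α.a + t + 1)
      have h2 := boolS_iff α (α.a + t + 1)
      simp only [List.get_eq_getElem] at hsnd
      cases hb : (g.path[t]).2 <;> cases hb' : boolS α (α.a + t + 1) <;> simp_all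
  have hlc : cl = mkLC n α.a α.one_le_a (by have := α.a_lt_b; have := α.b_le_n; omega) :=
    lc_eq_of_v hclv
  have hrc : cr = mkRC n (α.b - 1) (by have := α.a_lt_b; have := α.one_le_a; omega)
      (by have := α.a_lt_b; have := α.b_le_n; omega) :=
    rc_eq_of_v hcrv
  obtain ⟨lc, rc, path⟩ := g
  change lc = some cl at hcl
  change rc = some cr at hcr
  change path = mkPath α at hpath
  subst hcl hcr hpath
  rw [hlc, hrc]
  rfl

end ArcsBricksAux

namespace ArcsBricksAux

open FramedGraph

variable {n : ℕ}

/-! ### Level lemmas -/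

lemma level_a (α : Arc n) : α.level α.a = 1 / 2 := by
  rw [Arc.level, if_pos (Or.inl rfl)]

lemma level_b (α : Arc n) : α.level α.b = 1 / 2 := by
  rw [Arc.level, if_pos (Or.inr rfl)]

lemma level_interior (α : Arc n) {k : ℕ} (h1 : α.a < k) (h2 : k < α.b) :
    α.level k = if boolS α k = true then 1 else 0 := by
  rw [Arc.level, if_neg (by omega), boolS]
  split <;> simp_all

lemma level_interior_ne_half (α : Arc n) {k : ℕ} (h1 : α.a < k) (h2 : k < α.b) :
    α.level k ≠ 1 / 2 := by
  rw [level_interior α h1 h2]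
  split <;> norm_num

lemma inOrd_mkPath (α : Arc n) (t : ℕ) (ht : t < (mkPath α).length) :
    (oruga n).inOrd ((mkPath α)[t]) = α.level (α.a + t + 1) := by
  have ht' : t < α.b - 1 - α.a := by rw [mkPath_length] at ht; exact ht
  rw [mkPath_get _ _ ht]
  show (if boolS α (α.a + t + 1) = true then (1:ℚ) else 0) = _
  exact (level_interior α (by omega) (by omega)).symm

lemma outOrd_mkPath (α : Arc n) (t : ℕ) (ht : t < (mkPath α).length) :
    (oruga n).outOrd ((mkPath α)[t]) = α.level (α.a + t + 1) := by
  have ht' : t < α.b - 1 - α.a := by rw [mkPath_length] at ht; exact ht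
  rw [mkPath_get _ _ ht]
  show (if boolS α (α.a + t + 1) = true then (1:ℚ) else 0) = _
  exact (level_interior α (by omega) (by omega)).symm

/-! ### Filter of `ofFn` lists -/

lemma filter_ofFn_take {γ : Type*} : ∀ {L : ℕ} (f : Fin L → γ) (p : γ → Bool) (m : ℕ),
    (∀ i : Fin L, p (f i) = true ↔ (i : ℕ) < m) →
    (List.ofFn f).filter p = (List.ofFn f).take m := by
  intro L
  induction L with
  | zero => intro f p m h; simp
  | succ L ih =>
    intro f p m h
    cases m with
    | zero =>
      rw [List.take_zero]
      apply List.filter_eq_nil_iff.mpr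
      intro x hx
      obtain ⟨i, rfl⟩ := List.mem_ofFn.mp hx
      rw [h i]; omega
    | succ m =>
      rw [List.ofFn_succ, List.take_succ_cons,
        List.filter_cons_of_pos ((h 0).mpr (Nat.succ_pos m))]
      congr 1
      exact ih _ p m (fun i => by
        rw [h i.succ]
        simp [Fin.val_succ, Nat.succ_lt_succ_iff])

lemma filter_ofFn_drop {γ : Type*} : ∀ {L : ℕ} (f : Fin L → γ) (p : γ → Bool) (m : ℕ),
    (∀ i : Fin L, p (f i) = true ↔ m ≤ (i : ℕ)) →
    (List.ofFn f).filter p = (List.ofFn f).drop m := by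
  intro L
  induction L with
  | zero => intro f p m h; simp
  | succ L ih =>
    intro f p m h
    cases m with
    | zero =>
      rw [List.drop_zero]
      apply List.filter_eq_self.mpr
      intro x hx
      obtain ⟨i, rfl⟩ := List.mem_ofFn.mp hx
      rw [h i]; omega
    | succ m =>
      rw [List.ofFn_succ, List.drop_succ_cons,
        List.filter_cons_of_neg (by rw [h 0]; simp)]
      exact ih _ p m (fun i => by
        rw [h i.succ]
        simp [Fin.val_succ, Nat.succ_le_succ_iff])

/-! ### Key lists of the canonical brick -/

lemma inKeys_mkBrick (α : Arc n) (w : ℕ) (hw1 : α.a ≤ w) (hw2 : w ≤ α.b - 1) :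
    (mkBrick α).inKeys w = (List.range (w - α.a + 1)).map (fun j => α.level (w - j)) := by
  have hab := α.a_lt_b
  have hbn := α.b_le_n
  have ha1 := α.one_le_a
  have hPlen := mkPath_length α
  have hfil : (mkBrick α).path.filter (fun e => decide ((oruga n).tgt e ≤ w)) =
      (mkPath α).take (w - α.a) := by
    show (mkPath α).filter _ = _
    rw [mkPath]
    apply filter_ofFn_take
    intro i
    simp only [decide_eq_true_eq, tgt_def]
    show (α.a + (i : ℕ)) + 1 ≤ w ↔ (i : ℕ) < w - α.a
    omega
  rw [GRoute.inKeys, hfil]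
  have hkey : ((mkBrick α).lc).elim [] (fun c => [c.key]) = [(1 : ℚ) / 2] := by
    show [(mkLC n α.a _ _).key] = _
    rw [lc_key]
  rw [hkey]
  have hlen : ((mkPath α).take (w - α.a)).length = w - α.a := by
    rw [List.length_take, hPlen]; omega
  refine List.ext_getElem ?_ ?_
  · rw [List.length_append, List.length_map, List.length_reverse, hlen,
      List.length_map, List.length_range, List.length_singleton]
  · intro i h₁ h₂
    rw [List.length_map, List.length_range] at h₂
    rw [List.getElem_map, List.getElem_range, List.getElem_append]
    split
    · next hi =>
      rw [List.length_map, List.length_reverse, hlen] at hi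
      rw [List.getElem_map, List.getElem_reverse, List.getElem_take,
        inOrd_mkPath α _ (by rw [hPlen, hlen]; omega)]
      congr 1
      rw [hlen]
      omega
    · next hi =>
      rw [List.length_map, List.length_reverse, hlen] at hi
      rw [List.getElem_singleton]
      have : w - i = α.a := by omega
      rw [this, level_a]

lemma outKeys_mkBrick (α : Arc n) (w : ℕ) (hw1 : α.a ≤ w) (hw2 : w ≤ α.b - 1) :
    (mkBrick α).outKeys w =
      (List.range (α.b - w)).map (fun j => α.level (w + 1 + j)) := by
  have hab := α.a_lt_b
  have hbn := α.b_le_n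
  have ha1 := α.one_le_a
  have hPlen := mkPath_length α
  have hfil : (mkBrick α).path.filter (fun e => decide (w ≤ (oruga n).src e)) =
      (mkPath α).drop (w - α.a) := by
    show (mkPath α).filter _ = _
    rw [mkPath]
    apply filter_ofFn_drop
    intro i
    simp only [decide_eq_true_eq, src_def]
    show w ≤ α.a + (i : ℕ) ↔ w - α.a ≤ (i : ℕ)
    omega
  rw [GRoute.outKeys, hfil]
  have hkey : ((mkBrick α).rc).elim [] (fun c => [c.key]) = [(1 : ℚ) / 2] := by
    show [(mkRC n (α.b - 1) _ _).key] = _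
    rw [rc_key]
  rw [hkey]
  have hlen : ((mkPath α).drop (w - α.a)).length = α.b - 1 - w := by
    rw [List.length_drop, hPlen]; omega
  refine List.ext_getElem ?_ ?_
  · rw [List.length_append, List.length_map, hlen, List.length_map, List.length_range,
      List.length_singleton]
    omega
  · intro i h₁ h₂
    rw [List.length_map, List.length_range] at h₂
    rw [List.getElem_map, List.getElem_range, List.getElem_append]
    split
    · next hi =>
      rw [List.length_map, hlen] at hi
      rw [List.getElem_map, List.getElem_drop,
        outOrd_mkPath α _ (by rw [hPlen]; omega)]
      congr 1
      omega
    · next hi =>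
      rw [List.length_map, hlen] at hi
      rw [List.getElem_singleton]
      have : w + 1 + i = α.b := by omega
      rw [this, level_b]

/-! ### Passing through a vertex -/

lemma passes_mkBrick (α : Arc n) (w : ℕ) :
    (mkBrick α).passes w ↔ α.a ≤ w ∧ w ≤ α.b - 1 := by
  have hab := α.a_lt_b
  have hbn := α.b_le_n
  have ha1 := α.one_le_a
  have hPlen := mkPath_length α
  constructor
  · rintro (⟨e, he, hsrc | htgt⟩ | ⟨c, hc, hv⟩ | ⟨c, hc, hv⟩)
    · have he' : e ∈ mkPath α := he
      obtain ⟨t, ht, rfl⟩ := List.mem_iff_getElem.mp he'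
      rw [src_def, mkPath_get _ _ ht] at hsrc
      rw [hPlen] at ht
      simp only at hsrc
      constructor <;> omega
    · have he' : e ∈ mkPath α := he
      obtain ⟨t, ht, rfl⟩ := List.mem_iff_getElem.mp he'
      rw [tgt_def, mkPath_get _ _ ht] at htgt
      rw [hPlen] at ht
      simp only at htgt
      constructor <;> omega
    · have hc' : c = mkLC n α.a α.one_le_a (by omega) := by
        have h := hc
        simp only [mkBrick, Option.some.injEq] at h
        exact h.symm
      rw [hc'] at hv
      have hv' : α.a = w := hv
      omega
    · have hc' : c = mkRC n (α.b - 1) (by omega) (by omega) := by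
        have h := hc
        simp only [mkBrick, Option.some.injEq] at h
        exact h.symm
      rw [hc'] at hv
      have hv' : α.b - 1 = w := hv
      omega
  · rintro ⟨h1, h2⟩
    rcases Nat.eq_or_lt_of_le h1 with heq | hlt
    · exact Or.inr (Or.inl ⟨_, rfl, heq⟩)
    · refine Or.inl ⟨(mkPath α)[w - α.a - 1]'(by rw [hPlen]; omega), ?_, ?_⟩
      · exact List.getElem_mem _
      · right
        rw [tgt_def, mkPath_get _ _ (by rw [hPlen]; omega)]
        show α.a + (w - α.a - 1) + 1 = w
        omega

end ArcsBricksAux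

namespace ArcsBricksAux

open FramedGraph

variable {n : ℕ}

/-! ### Lexicographic comparison of mapped ranges -/

lemma lex_cons_cons {a b : ℚ} {l m : List ℚ} :
    lexLt (a :: l) (b :: m) ↔ a < b ∨ (a = b ∧ lexLt l m) := by
  constructor
  · intro h
    cases h with
    | cons h => exact Or.inr ⟨rfl, h⟩
    | rel h => exact Or.inl h
  · rintro (h | ⟨rfl, h⟩)
    · exact List.Lex.rel h
    · exact List.Lex.cons h

lemma lexLt_map_range (_F _G : ℕ → ℚ) :
    ∀ (m : ℕ) (m' : ℕ) (F G : ℕ → ℚ),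
      lexLt ((List.range m).map F) ((List.range m').map G) ↔
        ((∃ j, j < m ∧ j < m' ∧ F j < G j ∧ ∀ i, i < j → F i = G i) ∨
          (m < m' ∧ ∀ i, i < m → F i = G i)) := by
  intro m
  induction m with
  | zero =>
    intro m' F G
    cases m' with
    | zero => simp [lexLt]
    | succ m' =>
      simp only [List.range_zero, List.map_nil]
      rw [List.range_succ_eq_map]
      simp only [List.map_cons]
      constructor
      · intro _; exact Or.inr ⟨Nat.succ_pos _, fun i hi => absurd hi (Nat.not_lt_zero i)⟩
      · intro _; exact List.Lex.nil
  | succ m ih =>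
    intro m' F G
    cases m' with
    | zero =>
      simp only [List.range_zero, List.map_nil]
      constructor
      · intro h; exact absurd h (List.not_lex_nil)
      · rintro (⟨j, _, hj, _⟩ | ⟨h, _⟩) <;> omega
    | succ m' =>
      rw [List.range_succ_eq_map, List.range_succ_eq_map]
      simp only [List.map_cons, List.map_map]
      rw [lex_cons_cons]
      rw [ih m' (F ∘ Nat.succ) (G ∘ Nat.succ)]
      constructor
      · rintro (h0 | ⟨he, (⟨j, hj1, hj2, hj3, hj4⟩ | ⟨hlt, hall⟩)⟩)
        · exact Or.inl ⟨0, Nat.succ_pos _, Nat.succ_pos _, h0, fun i hi => absurd hi (by omega)⟩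
        · refine Or.inl ⟨j + 1, by omega, by omega, hj3, ?_⟩
          intro i hi
          cases i with
          | zero => exact he
          | succ i => exact hj4 i (by omega)
        · refine Or.inr ⟨by omega, ?_⟩
          intro i hi
          cases i with
          | zero => exact he
          | succ i => exact hall i (by omega)
      · rintro (⟨j, hj1, hj2, hj3, hj4⟩ | ⟨hlt, hall⟩)
        · cases j with
          | zero => exact Or.inl hj3
          | succ j =>
            refine Or.inr ⟨hj4 0 (Nat.succ_pos _), Or.inl ⟨j, by omega, by omega, hj3, ?_⟩⟩
            intro i hi
            exact hj4 (i + 1) (by omega)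
        · refine Or.inr ⟨hall 0 (by omega), Or.inr ⟨by omega, ?_⟩⟩
          intro i hi
          exact hall (i + 1) (by omega)

/-! ### Downward and upward comparison predicates -/

def Dlt (α β : Arc n) (w : ℕ) : Prop :=
  ∃ u, max α.a β.a ≤ u ∧ u ≤ w ∧ α.level u < β.level u ∧
    ∀ k, u < k → k ≤ w → α.level k = β.level k

def Ult (α β : Arc n) (w : ℕ) : Prop :=
  ∃ v, w + 1 ≤ v ∧ v ≤ min α.b β.b ∧ α.level v < β.level v ∧
    ∀ k, w + 1 ≤ k → k < v → α.level k = β.level k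

lemma inKeys_lt_iff (α β : Arc n) (w : ℕ)
    (hα1 : α.a ≤ w) (hα2 : w ≤ α.b - 1) (hβ1 : β.a ≤ w) (hβ2 : w ≤ β.b - 1) :
    lexLt ((mkBrick α).inKeys w) ((mkBrick β).inKeys w) ↔ Dlt α β w := by
  have hαab := α.a_lt_b
  have hβab := β.a_lt_b
  rw [inKeys_mkBrick α w hα1 hα2, inKeys_mkBrick β w hβ1 hβ2,
    lexLt_map_range (fun _ => 0) (fun _ => 0)]
  constructor
  · rintro (⟨j, hj1, hj2, hj3, hj4⟩ | ⟨hlt, hall⟩)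
    · refine ⟨w - j, by omega, by omega, ?_, ?_⟩
      · have : w - (w - j) = j := by omega
        rw [← this] at hj3
        convert hj3 using 2 <;> omega
      · intro k hk1 hk2
        have := hj4 (w - k) (by omega)
        have hwk : w - (w - k) = k := by omega
        rwa [hwk] at this
    · exfalso
      have hba : β.a < α.a := by omega
      have := hall (w - α.a) (by omega)
      have h1 : w - (w - α.a) = α.a := by omega
      rw [h1] at this
      rw [level_a] at this
      exact level_interior_ne_half β (by omega) (by omega) this.symm
  · rintro ⟨u, hu1, hu2, hu3, hu4⟩
    refine Or.inl ⟨w - u, by omega, by omega, ?_, ?_⟩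
    · have : w - (w - u) = u := by omega
      rw [this]; exact hu3
    · intro i hi
      exact hu4 (w - i) (by omega) (by omega)

lemma outKeys_lt_iff (α β : Arc n) (w : ℕ)
    (hα1 : α.a ≤ w) (hα2 : w ≤ α.b - 1) (hβ1 : β.a ≤ w) (hβ2 : w ≤ β.b - 1) :
    lexLt ((mkBrick α).outKeys w) ((mkBrick β).outKeys w) ↔ Ult α β w := by
  have hαab := α.a_lt_b
  have hβab := β.a_lt_b
  rw [outKeys_mkBrick α w hα1 hα2, outKeys_mkBrick β w hβ1 hβ2,
    lexLt_map_range (fun _ => 0) (fun _ => 0)]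
  constructor
  · rintro (⟨j, hj1, hj2, hj3, hj4⟩ | ⟨hlt, hall⟩)
    · refine ⟨w + 1 + j, by omega, by omega, hj3, ?_⟩
      intro k hk1 hk2
      have := hj4 (k - (w + 1)) (by omega)
      have hwk : w + 1 + (k - (w + 1)) = k := by omega
      rwa [hwk] at this
    · exfalso
      have hba : α.b < β.b := by omega
      have := hall (α.b - 1 - w) (by omega)
      have h1 : w + 1 + (α.b - 1 - w) = α.b := by omega
      rw [h1] at this
      rw [level_b] at this
      exact level_interior_ne_half β (by omega) (by omega) this.symm
  · rintro ⟨v, hv1, hv2, hv3, hv4⟩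
    refine Or.inl ⟨v - (w + 1), by omega, by omega, ?_, ?_⟩
    · have : w + 1 + (v - (w + 1)) = v := by omega
      rw [this]; exact hv3
    · intro i hi
      exact hv4 (w + 1 + i) (by omega) (by omega)

end ArcsBricksAux

namespace ArcsBricksAux

open FramedGraph

variable {n : ℕ}

lemma cwAt_iff (α β : Arc n) (w : ℕ) :
    CwAt (mkBrick α) (mkBrick β) w ↔
      ((α.a ≤ w ∧ w ≤ α.b - 1) ∧ (β.a ≤ w ∧ w ≤ β.b - 1) ∧ Dlt α β w ∧ Ult β α w) := by
  unfold CwAt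
  rw [passes_mkBrick, passes_mkBrick]
  constructor
  · rintro ⟨hp1, hp2, h3, h4⟩
    exact ⟨hp1, hp2, (inKeys_lt_iff α β w hp1.1 hp1.2 hp2.1 hp2.2).mp h3,
      (outKeys_lt_iff β α w hp2.1 hp2.2 hp1.1 hp1.2).mp h4⟩
  · rintro ⟨hp1, hp2, h3, h4⟩
    exact ⟨hp1, hp2, (inKeys_lt_iff α β w hp1.1 hp1.2 hp2.1 hp2.2).mpr h3,
      (outKeys_lt_iff β α w hp2.1 hp2.2 hp1.1 hp1.2).mpr h4⟩

lemma cross_to_witness (α β : Arc n) {u v : ℕ}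
    (h1 : max α.a β.a ≤ u) (h2 : u ≤ v) (h3 : v ≤ min α.b β.b)
    (h4 : α.level u < β.level u) (h5 : β.level v < α.level v) :
    ∃ w, (α.a ≤ w ∧ w ≤ α.b - 1) ∧ (β.a ≤ w ∧ w ≤ β.b - 1) ∧ Dlt α β w ∧ Ult β α w := by
  have hαab := α.a_lt_b
  have hβab := β.a_lt_b
  have huv : u < v := by
    rcases Nat.lt_or_ge u v with h | h
    · exact h
    · exfalso
      have : u = v := by omega
      subst this
      exact absurd h5 (not_lt.mpr h4.le)
  set P : ℕ → Prop := fun k => α.level k < β.level k with hP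
  set u' := Nat.findGreatest P v with hu'
  have hPu : P u := h4
  have hu'ge : u ≤ u' := Nat.le_findGreatest (by omega) hPu
  have hPu' : P u' := Nat.findGreatest_spec (m := u) (by omega) hPu
  have hu'le : u' ≤ v := Nat.findGreatest_le v
  have hu'v : u' < v := by
    rcases Nat.lt_or_ge u' v with h | h
    · exact h
    · exfalso
      have : u' = v := by omega
      rw [this] at hPu'
      exact absurd hPu' (not_lt.mpr h5.le)
  have hex : ∃ d, α.level (u' + 1 + d) ≠ β.level (u' + 1 + d) := by
    refine ⟨v - (u' + 1), ?_⟩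
    have hv : u' + 1 + (v - (u' + 1)) = v := by omega
    rw [hv]
    exact ne_of_gt h5
  set d0 := Nat.find hex with hd0def
  set v' := u' + 1 + d0 with hv'def
  have hd0 : α.level v' ≠ β.level v' := Nat.find_spec hex
  have hv'le : v' ≤ v := by
    have := Nat.find_min' hex (m := v - (u' + 1)) (by
      have hv : u' + 1 + (v - (u' + 1)) = v := by omega
      rw [hv]
      exact ne_of_gt h5)
    omega
  have hv'gt : ¬P v' := Nat.findGreatest_is_greatest (n := v) (by omega) (by omega)
  have hβα : β.level v' < α.level v' := lt_of_le_of_ne (not_lt.mp hv'gt) (Ne.symm hd0)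
  have hmin : ∀ k, u' < k → k < v' → α.level k = β.level k := by
    intro k hk1 hk2
    by_contra hne
    refine Nat.find_min hex (m := k - (u' + 1)) (by omega) ?_
    have hk : u' + 1 + (k - (u' + 1)) = k := by omega
    rw [hk]
    exact hne
  refine ⟨v' - 1, ⟨by omega, by omega⟩, ⟨by omega, by omega⟩,
    ⟨u', by omega, by omega, hPu', fun k hk1 hk2 => hmin k hk1 (by omega)⟩,
    ⟨v', by omega, by omega, hβα, fun k hk1 hk2 => by omega⟩⟩

lemma weak_iff (α β : Arc n) :
    WeakCoherent (mkBrick α) (mkBrick β) ↔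
      ¬∃ u v : ℕ, max α.a β.a ≤ u ∧ u ≤ v ∧ v ≤ min α.b β.b ∧
        ((α.level u < β.level u ∧ β.level v < α.level v) ∨
          (β.level u < α.level u ∧ α.level v < β.level v)) := by
  constructor
  · rintro hw ⟨u, v, hu, huv, hv, hor⟩
    rcases hor with ⟨hc1, hc2⟩ | ⟨hc1, hc2⟩
    · obtain ⟨w, hw1, hw2, hw3, hw4⟩ := cross_to_witness α β hu huv hv hc1 hc2
      exact (hw w).1 ((cwAt_iff α β w).mpr ⟨hw1, hw2, hw3, hw4⟩)
    · obtain ⟨w, hw1, hw2, hw3, hw4⟩ :=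
        cross_to_witness β α (by omega) huv (by omega) hc1 hc2
      exact (hw w).2 ((cwAt_iff β α w).mpr ⟨hw1, hw2, hw3, hw4⟩)
  · intro hnc w
    constructor
    · intro hcw
      obtain ⟨hb1, hb2, ⟨u, hu1, hu2, hu3, _⟩, ⟨v, hv1, hv2, hv3, _⟩⟩ :=
        (cwAt_iff α β w).mp hcw
      exact hnc ⟨u, v, by omega, by omega, by omega, Or.inl ⟨hu3, hv3⟩⟩
    · intro hcw
      obtain ⟨hb1, hb2, ⟨u, hu1, hu2, hu3, _⟩, ⟨v, hv1, hv2, hv3, _⟩⟩ :=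
        (cwAt_iff β α w).mp hcw
      exact hnc ⟨u, v, by omega, by omega, by omega, Or.inr ⟨hu3, hv3⟩⟩

lemma lc_cond_iff (α β : Arc n) :
    (∀ c, (mkBrick α).lc = some c → (mkBrick β).lc ≠ some c) ↔ α.a ≠ β.a := by
  constructor
  · intro h hab
    refine h (mkLC n α.a α.one_le_a (by have := α.a_lt_b; have := α.b_le_n; omega)) rfl ?_
    show some _ = some _
    congr 1
    exact lc_eq_of_v (by show β.a = α.a; omega)
  · intro hab c hc hc'
    have h1 : c = mkLC n α.a α.one_le_a (by have := α.a_lt_b; have := α.b_le_n; omega) :=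
      (Option.some.inj hc).symm
    have h2 : c = mkLC n β.a β.one_le_a (by have := β.a_lt_b; have := β.b_le_n; omega) :=
      (Option.some.inj hc').symm
    apply hab
    have : (mkLC n α.a α.one_le_a (by have := α.a_lt_b; have := α.b_le_n; omega)).v =
        (mkLC n β.a β.one_le_a (by have := β.a_lt_b; have := β.b_le_n; omega)).v := by
      rw [← h1, ← h2]
    exact this

lemma rc_cond_iff (α β : Arc n) :
    (∀ c, (mkBrick α).rc = some c → (mkBrick β).rc ≠ some c) ↔ α.b ≠ β.b := by
  have hα := α.a_lt_b
  have hα1 := α.one_le_a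
  have hβ := β.a_lt_b
  have hβ1 := β.one_le_a
  constructor
  · intro h hab
    refine h (mkRC n (α.b - 1) (by omega) (by have := α.b_le_n; omega)) rfl ?_
    show some _ = some _
    congr 1
    exact rc_eq_of_v (by show β.b - 1 = α.b - 1; omega)
  · intro hab c hc hc'
    have h1 : c = mkRC n (α.b - 1) (by omega) (by have := α.b_le_n; omega) :=
      (Option.some.inj hc).symm
    have h2 : c = mkRC n (β.b - 1) (by omega) (by have := β.b_le_n; omega) :=
      (Option.some.inj hc').symm
    apply hab
    have : (mkRC n (α.b - 1) (by omega) (by have := α.b_le_n; omega) : (oruga n).RightCorner).v =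
        (mkRC n (β.b - 1) (by omega) (by have := β.b_le_n; omega) : (oruga n).RightCorner).v := by
      rw [← h1, ← h2]
    have h3 : α.b - 1 = β.b - 1 := this
    omega

lemma noncrossing_iff_coherent (α β : Arc n) :
    Noncrossing α β ↔ Coherent (mkBrick α) (mkBrick β) := by
  rw [Noncrossing, Coherent, weak_iff, lc_cond_iff, rc_cond_iff]
  tauto

end ArcsBricksAux

namespace ArcsBricksAux

open FramedGraph

variable {n : ℕ}

lemma exists_arc (g : (oruga n).GRoute) (hg : IsBrick g) :
    ∃ α : Arc n, ArcCorresponds α g := by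
  obtain ⟨⟨hpath, hhead, hlast, hempty⟩, hlcs, hrcs⟩ := hg
  obtain ⟨cl, hcl⟩ := Option.isSome_iff_exists.mp hlcs
  obtain ⟨cr, hcr⟩ := Option.isSome_iff_exists.mp hrcs
  simp only [hcl] at hhead hempty
  simp only [hcr] at hlast hempty
  have ha1 : 1 ≤ cl.v := by
    have h := cl.tgt_lo
    rw [tgt_def] at h
    omega
  have hcrn : cr.v < n := by
    have h := cr.src_lo
    rw [src_def] at h
    have := cr.lo.1.isLt
    omega
  have hstep : ∀ t (ht : t + 1 < g.path.length),
      (g.path[t + 1].1 : ℕ) = (g.path[t].1 : ℕ) + 1 := by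
    intro t ht
    have h := (List.isChain_iff_getElem.mp hpath) t (by omega)
    rw [tgt_def, src_def] at h
    omega
  have hfst : ∀ t (ht : t < g.path.length), (g.path[t].1 : ℕ) = cl.v + t := by
    intro t
    induction t with
    | zero =>
      intro ht
      have hh : g.path.head? = some (g.path[0]) := by
        rw [List.head?_eq_getElem?, List.getElem?_eq_getElem ht]
      have h := hhead _ hh
      rw [src_def] at h
      omega
    | succ t ih =>
      intro ht
      rw [hstep t ht, ih (by omega)]
      omega
  have hlen : cr.v = cl.v + g.path.length := by
    rcases Nat.eq_zero_or_pos g.path.length with h0 | h0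
    · obtain ⟨cl', cr', hcl', hcr', hvv⟩ := hempty (List.length_eq_zero_iff.mp h0)
      obtain rfl := Option.some.inj hcl'
      obtain rfl := Option.some.inj hcr'
      omega
    · have hh : g.path.getLast? = some (g.path[g.path.length - 1]) := by
        rw [List.getLast?_eq_getElem?, List.getElem?_eq_getElem (by omega)]
      have h := hlast _ hh
      rw [tgt_def] at h
      rw [hfst _ (by omega)] at h
      omega
  refine ⟨⟨cl.v, cr.v + 1,
    {k | ∃ t, ∃ ht : t < g.path.length, k = cl.v + t + 1 ∧ (g.path[t]).2 = true},
    ha1, by omega, by omega, ?_⟩, ?_⟩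
  · rintro k ⟨t, ht, rfl, -⟩
    exact ⟨by omega, by omega⟩
  · refine ⟨⟨cl, hcl, rfl⟩, ⟨cr, hcr, by show cr.v = cr.v + 1 - 1; omega⟩, by show g.path.length = cr.v + 1 - 1 - cl.v; omega, ?_⟩
    intro t ht
    simp only [List.get_eq_getElem]
    refine ⟨hfst t ht, ?_, ?_⟩
    · intro h
      exact ⟨t, ht, rfl, h⟩
    · rintro ⟨t', ht', heq, h2⟩
      have : t = t' := by omega
      subst this
      exact h2

lemma S_subset {α β : Arc n} {g : (oruga n).GRoute}
    (h1 : ArcCorresponds α g) (h2 : ArcCorresponds β g) (hab : α.a = β.a) {k : ℕ}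
    (hk : k ∈ α.S) : k ∈ β.S := by
  obtain ⟨-, -, hlen, hget⟩ := h1
  obtain ⟨-, -, -, hget'⟩ := h2
  obtain ⟨hka, hkb⟩ := α.S_mem k hk
  have ht : k - α.a - 1 < g.path.length := by omega
  have heq : α.a + (k - α.a - 1) + 1 = k := by omega
  have hv := (hget _ ht).2.mpr (by rw [heq]; exact hk)
  have h2' := (hget' _ ht).2.mp hv
  rwa [← hab, heq] at h2'

lemma arc_unique {α β : Arc n} {g : (oruga n).GRoute}
    (h1 : ArcCorresponds α g) (h2 : ArcCorresponds β g) : α = β := by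
  have hab : α.a = β.a := by
    obtain ⟨⟨cl, hcl, hclv⟩, -, -, -⟩ := h1
    obtain ⟨⟨cl', hcl', hclv'⟩, -, -, -⟩ := h2
    rw [hcl] at hcl'
    obtain rfl := Option.some.inj hcl'
    omega
  have hbb : α.b = β.b := by
    obtain ⟨-, ⟨cr, hcr, hcrv⟩, -, -⟩ := h1
    obtain ⟨-, ⟨cr', hcr', hcrv'⟩, -, -⟩ := h2
    rw [hcr] at hcr'
    obtain rfl := Option.some.inj hcr'
    have := α.a_lt_b
    have := β.a_lt_b
    have := α.one_le_a
    have := β.one_le_a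
    omega
  have hS : α.S = β.S := Set.ext fun k =>
    ⟨fun hk => S_subset h1 h2 hab hk, fun hk => S_subset h2 h1 hab.symm hk⟩
  obtain ⟨a1, b1, S1, p1, p2, p3, p4⟩ := α
  obtain ⟨a2, b2, S2, q1, q2, q3, q4⟩ := β
  simp_all

end ArcsBricksAux

/-- The map `α ↦ s̄_α` is a bijection between arcs on `[n]` and bricks
of the oruga graph of size `n`, and two arcs form a noncrossing arc diagram iff the
corresponding bricks are coherent. -/
theorem arcs_bricks_bijection (n : ℕ) :
    (∀ α : Arc n, ∃! g : FramedGraph.GRoute (oruga n),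
      IsBrick g ∧ ArcCorresponds α g) ∧
    (∀ g : FramedGraph.GRoute (oruga n), IsBrick g → ∃! α : Arc n, ArcCorresponds α g) ∧
    ∀ (α β : Arc n) (g h : FramedGraph.GRoute (oruga n)),
      ArcCorresponds α g → ArcCorresponds β h →
      (Noncrossing α β ↔ Coherent g h) := by
  refine ⟨?_, ?_, ?_⟩
  · intro α
    exact ⟨ArcsBricksAux.mkBrick α,
      ⟨ArcsBricksAux.mkBrick_isBrick α, ArcsBricksAux.mkBrick_corresponds α⟩,
      fun g hg => ArcsBricksAux.corresponds_unique hg.2⟩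
  · intro g hg
    obtain ⟨α, hα⟩ := ArcsBricksAux.exists_arc g hg
    exact ⟨α, hα, fun β hβ => ArcsBricksAux.arc_unique hβ hα⟩
  · intro α β g h hg hh
    obtain rfl := ArcsBricksAux.corresponds_unique hg
    obtain rfl := ArcsBricksAux.corresponds_unique hh
    exact ArcsBricksAux.noncrossing_iff_coherent α β
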